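/- Let C be a real number minimizing c ↦ E[L(Z + c)]. Then Var[L(Z + C)] = Var[L(Z)] holds if and only if C = 0, which in turn holds if and only if k₁ = k₂. -/

import Mathlib

open MeasureTheory ProbabilityTheory Set
open scoped ENNReal NNReal

namespace VLS

variable {f : ℝ → ℝ}

lemma f_integrable (hf_total : ∫ z, f z = 1) : Integrable f := by
  by_contra h
  rw [integral_undef h] at hf_total
  norm_num at hf_total

lemma f_mono (hf_anti : ∀ x y : ℝ, 0 ≤ x → x < y → f y < f x) :
    ∀ {x y : ℝ}, 0 ≤ x → x ≤ y → f y ≤ f x := by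
  intro x y hx hxy
  rcases eq_or_lt_of_le hxy with rfl | h
  · exact le_rfl
  · exact (hf_anti x y hx h).le

lemma f_pos (hf_nonneg : ∀ x, 0 ≤ f x) (hf_symm : ∀ x, f (-x) = f x)
    (hf_anti : ∀ x y : ℝ, 0 ≤ x → x < y → f y < f x) : ∀ x, 0 < f x := by
  have key : ∀ x : ℝ, 0 ≤ x → 0 < f x := by
    intro x hx
    exact lt_of_le_of_lt (hf_nonneg (x + 1)) (hf_anti x (x + 1) hx (by linarith))
  intro x
  rcases le_or_gt 0 x with hx | hx
  · exact key x hx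
  · rw [← hf_symm x] at *
    exact key (-x) (by linarith)

/-- `f x ≥ f M` whenever `|x| ≤ M`. -/
lemma f_ge_of_abs_le (hf_symm : ∀ x, f (-x) = f x)
    (hf_anti : ∀ x y : ℝ, 0 ≤ x → x < y → f y < f x) {x M : ℝ} (h : |x| ≤ M) :
    f M ≤ f x := by
  have h1 : f x = f |x| := by
    rcases abs_cases x with ⟨h2, _⟩ | ⟨h2, _⟩
    · rw [h2]
    · rw [h2, hf_symm]
  rw [h1]
  exact f_mono hf_anti (abs_nonneg x) h

/-- positivity of the integral of `f` on a nonempty interval `Ioc a b`. -/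
lemma integral_f_Ioc_pos (hf_meas : Measurable f) (hf_nonneg : ∀ x, 0 ≤ f x)
    (hf_symm : ∀ x, f (-x) = f x)
    (hf_anti : ∀ x y : ℝ, 0 ≤ x → x < y → f y < f x)
    (hf_int : Integrable f) {a b : ℝ} (hab : a < b) :
    0 < ∫ z in Ioc a b, f z := by
  set M := max |a| |b| with hM
  have hMpos : 0 < f M := f_pos hf_nonneg hf_symm hf_anti M
  have hle : ∀ z ∈ Ioc a b, f M ≤ f z := by
    intro z hz
    apply f_ge_of_abs_le hf_symm hf_anti
    rcases abs_cases z with ⟨h2, _⟩ | ⟨h2, h3⟩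
    · rw [h2]; exact le_trans (le_trans hz.2 (le_abs_self b)) (le_max_right _ _)
    · rw [h2]; exact le_trans (le_trans (by linarith [hz.1] : -z ≤ -a) (neg_le_abs a)) (le_max_left _ _)
  calc (0:ℝ) < (b - a) * f M := by
        have : 0 < b - a := by linarith
        positivity
    _ = ∫ _ in Ioc a b, f M := by
        rw [setIntegral_const, Real.volume_real_Ioc_of_le (by linarith), smul_eq_mul]
    _ ≤ ∫ z in Ioc a b, f z := by
        apply setIntegral_mono_on ((integrableOn_const_iff (C := f M)).mpr ?_) (hf_int.integrableOn) measurableSet_Ioc hle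
        right; rw [Real.volume_Ioc]; exact ENNReal.ofReal_lt_top


/-- Integrability of `f·φ` for `φ` of quadratic growth. -/
lemma integrable_f_mul (hf_nonneg : ∀ x, 0 ≤ f x) (hf_int : Integrable f)
    (hmom : Integrable (fun z => z ^ 2 * f z))
    {φ : ℝ → ℝ} (hφm : AEStronglyMeasurable φ volume) {a b : ℝ}
    (ha : 0 ≤ a) (hb : 0 ≤ b) (hbound : ∀ z, |φ z| ≤ a + b * z ^ 2) :
    Integrable (fun z => f z * φ z) := by
  have hg : Integrable (fun z => a * f z + b * (z ^ 2 * f z)) :=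
    (hf_int.const_mul a).add (hmom.const_mul b)
  refine hg.mono (hf_int.aestronglyMeasurable.mul hφm) (Filter.Eventually.of_forall fun z => ?_)
  have h1 : |f z * φ z| = f z * |φ z| := by
    rw [abs_mul, abs_of_nonneg (hf_nonneg z)]
  have h2 : f z * |φ z| ≤ f z * (a + b * z ^ 2) :=
    mul_le_mul_of_nonneg_left (hbound z) (hf_nonneg z)
  have h3 : a * f z + b * (z ^ 2 * f z) ≤ ‖a * f z + b * (z ^ 2 * f z)‖ := le_abs_self _
  simp only [Real.norm_eq_abs] at *
  nlinarith [hf_nonneg z, sq_nonneg z]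


section Transfer

variable {Ω : Type*} [MeasurableSpace Ω] {μ : Measure Ω} {Z : Ω → ℝ}

lemma dens_eq (f : ℝ → ℝ) :
    (fun z => ENNReal.ofReal (f z)) = (fun z => ((f z).toNNReal : ℝ≥0∞)) := rfl

lemma transfer_eq (hZ : Measurable Z)
    (hf_meas : Measurable f) (hf_nonneg : ∀ x, 0 ≤ f x)
    (hdens : Measure.map Z μ = volume.withDensity fun z => ENNReal.ofReal (f z))
    {φ : ℝ → ℝ} (hφm : AEStronglyMeasurable φ volume) :
    ∫ ω, φ (Z ω) ∂μ = ∫ z, f z * φ z := by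
  have hac : Measure.map Z μ ≪ volume := by
    rw [hdens]; exact withDensity_absolutelyContinuous _ _
  have hφ' : AEStronglyMeasurable φ (Measure.map Z μ) := hφm.mono_ac hac
  rw [← integral_map hZ.aemeasurable hφ', hdens, dens_eq,
    integral_withDensity_eq_integral_smul (hf_meas.real_toNNReal)]
  congr 1
  ext z
  rw [NNReal.smul_def, smul_eq_mul, Real.coe_toNNReal _ (hf_nonneg z)]

lemma transfer_integrable (hZ : Measurable Z)
    (hf_meas : Measurable f) (hf_nonneg : ∀ x, 0 ≤ f x)
    (hdens : Measure.map Z μ = volume.withDensity fun z => ENNReal.ofReal (f z))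
    {φ : ℝ → ℝ} (hφm : AEStronglyMeasurable φ volume)
    (hint : Integrable (fun z => f z * φ z) volume) :
    Integrable (fun ω => φ (Z ω)) μ := by
  have hac : Measure.map Z μ ≪ volume := by
    rw [hdens]; exact withDensity_absolutelyContinuous _ _
  have hφ' : AEStronglyMeasurable φ (Measure.map Z μ) := hφm.mono_ac hac
  have : Integrable φ (Measure.map Z μ) := by
    rw [hdens, dens_eq, integrable_withDensity_iff_integrable_smul hf_meas.real_toNNReal]
    refine hint.congr (Filter.Eventually.of_forall fun z => ?_)
    simp only [NNReal.smul_def, smul_eq_mul, Real.coe_toNNReal _ (hf_nonneg z)]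
  exact (integrable_map_measure hφ' hZ.aemeasurable).mp this

end Transfer


section Loss

variable {k₁ k₂ : ℝ} {L : ℝ → ℝ}

lemma L_meas (hL : ∀ z, L z = if 0 ≤ z then k₁ * z else -k₂ * z) : Measurable L := by
  have : L = fun z => if 0 ≤ z then k₁ * z else -k₂ * z := funext hL
  rw [this]
  exact Measurable.ite (measurableSet_le measurable_const measurable_id)
    (measurable_id.const_mul _) (measurable_id.const_mul _)

lemma L_lip (hk₁ : 0 < k₁) (hk₂ : 0 < k₂)
    (hL : ∀ z, L z = if 0 ≤ z then k₁ * z else -k₂ * z) (a b : ℝ) :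
    |L a - L b| ≤ max k₁ k₂ * |a - b| := by
  rw [hL a, hL b]
  rcases le_or_gt 0 a with ha | ha <;> rcases le_or_gt 0 b with hb | hb
  · rw [if_pos ha, if_pos hb]
    rw [abs_le]; constructor <;>
      nlinarith [le_abs_self (a - b), neg_abs_le (a - b), le_max_left k₁ k₂,
        le_max_right k₁ k₂, abs_nonneg (a - b)]
  · rw [if_pos ha, if_neg (not_le.mpr hb)]
    rw [abs_le]; constructor <;>
      nlinarith [le_abs_self (a - b), neg_abs_le (a - b), le_max_left k₁ k₂,
        le_max_right k₁ k₂, abs_nonneg (a - b)]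
  · rw [if_neg (not_le.mpr ha), if_pos hb]
    rw [abs_le]; constructor <;>
      nlinarith [le_abs_self (a - b), neg_abs_le (a - b), le_max_left k₁ k₂,
        le_max_right k₁ k₂, abs_nonneg (a - b)]
  · rw [if_neg (not_le.mpr ha), if_neg (not_le.mpr hb)]
    rw [abs_le]; constructor <;>
      nlinarith [le_abs_self (a - b), neg_abs_le (a - b), le_max_left k₁ k₂,
        le_max_right k₁ k₂, abs_nonneg (a - b)]

lemma L_bound (hk₁ : 0 < k₁) (hk₂ : 0 < k₂)
    (hL : ∀ z, L z = if 0 ≤ z then k₁ * z else -k₂ * z) (x : ℝ) :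
    |L x| ≤ max k₁ k₂ * |x| := by
  have := L_lip hk₁ hk₂ hL x 0
  have h0 : L 0 = 0 := by rw [hL]; simp
  rw [h0, sub_zero, sub_zero] at this
  exact this

end Loss


section FOC

variable {k₁ k₂ : ℝ} {L : ℝ → ℝ}

lemma integrable_f_L (hf_meas : Measurable f) (hf_nonneg : ∀ x, 0 ≤ f x)
    (hf_int : Integrable f) (hmom : Integrable (fun z => z ^ 2 * f z))
    (hk₁ : 0 < k₁) (hk₂ : 0 < k₂)
    (hL : ∀ z, L z = if 0 ≤ z then k₁ * z else -k₂ * z) (c : ℝ) :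
    Integrable (fun z => f z * L (z + c)) := by
  set K := max k₁ k₂ with hK
  have hKpos : 0 < K := lt_max_of_lt_left hk₁
  refine integrable_f_mul hf_nonneg hf_int hmom
    ((L_meas hL).comp (measurable_id.add_const c)).aestronglyMeasurable
    (a := K * (|c| + 1/2)) (b := K * (1/2)) (by positivity) (by positivity) fun z => ?_
  have h1 := L_bound hk₁ hk₂ hL (z + c)
  have h2 : |z + c| ≤ |z| + |c| := abs_add_le z c
  have h3 : |z| ≤ 1/2 + z ^ 2 / 2 := by nlinarith [sq_abs z, sq_nonneg (|z| - 1)]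
  nlinarith [abs_nonneg (z + c), abs_nonneg z, abs_nonneg c]

lemma integrable_f_Lsq (hf_meas : Measurable f) (hf_nonneg : ∀ x, 0 ≤ f x)
    (hf_int : Integrable f) (hmom : Integrable (fun z => z ^ 2 * f z))
    (hk₁ : 0 < k₁) (hk₂ : 0 < k₂)
    (hL : ∀ z, L z = if 0 ≤ z then k₁ * z else -k₂ * z) (c : ℝ) :
    Integrable (fun z => f z * (L (z + c)) ^ 2) := by
  set K := max k₁ k₂ with hK
  have hKpos : 0 < K := lt_max_of_lt_left hk₁
  refine integrable_f_mul hf_nonneg hf_int hmom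
    ((((L_meas hL).comp (measurable_id.add_const c))).pow_const 2).aestronglyMeasurable
    (a := K ^ 2 * (2 * c ^ 2)) (b := K ^ 2 * 2)
    (mul_nonneg (sq_nonneg K) (by positivity)) (mul_nonneg (sq_nonneg K) (by norm_num))
    fun z => ?_
  have h1 := L_bound hk₁ hk₂ hL (z + c)
  have h2 : (L (z + c)) ^ 2 ≤ (K * |z + c|) ^ 2 := by
    have := abs_nonneg (L (z + c))
    nlinarith [sq_abs (L (z + c))]
  have h3 : |(L (z + c)) ^ 2| = (L (z + c)) ^ 2 := abs_of_nonneg (sq_nonneg _)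
  have h4 : (z + c) ^ 2 ≤ 2 * z ^ 2 + 2 * c ^ 2 := by nlinarith [sq_nonneg (z - c)]
  rw [h3]
  calc (L (z + c)) ^ 2 ≤ (K * |z + c|) ^ 2 := h2
    _ = K ^ 2 * (z + c) ^ 2 := by rw [mul_pow, sq_abs]
    _ ≤ K ^ 2 * (2 * c ^ 2) + K ^ 2 * 2 * z ^ 2 := by nlinarith [sq_nonneg K]

lemma foc (hf_meas : Measurable f) (hf_nonneg : ∀ x, 0 ≤ f x)
    (hf_int : Integrable f) (hmom : Integrable (fun z => z ^ 2 * f z))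
    (hk₁ : 0 < k₁) (hk₂ : 0 < k₂)
    (hL : ∀ z, L z = if 0 ≤ z then k₁ * z else -k₂ * z) (C : ℝ)
    (hmin : ∀ c : ℝ, (∫ z, f z * L (z + C)) ≤ ∫ z, f z * L (z + c)) :
    k₁ * (∫ z in Ioi (-C), f z) = k₂ * ∫ z in Iio (-C), f z := by
  set K := max k₁ k₂ with hK
  have hKpos : 0 < K := lt_max_of_lt_left hk₁
  have hmeas : ∀ c : ℝ, AEStronglyMeasurable (fun z => f z * L (z + c)) volume := fun c =>
    (hf_meas.mul ((L_meas hL).comp (measurable_id.add_const c))).aestronglyMeasurable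
  set F' : ℝ → ℝ := fun z => f z * (if -C < z then k₁ else -k₂) with hF'
  have hF'meas : AEStronglyMeasurable F' volume :=
    (hf_meas.mul (Measurable.ite (measurableSet_lt measurable_const measurable_id)
      measurable_const measurable_const)).aestronglyMeasurable
  have hbound_int : Integrable (fun z => K * f z) := hf_int.const_mul K
  have hlip : ∀ᵐ z : ℝ, LipschitzOnWith (Real.nnabs (K * f z))
      (fun c => f z * L (z + c)) (Metric.ball C 1) := by
    refine Filter.Eventually.of_forall fun z => LipschitzOnWith.of_dist_le_mul fun x _ y _ => ?_
    rw [Real.dist_eq, Real.dist_eq]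
    have h1 : f z * L (z + x) - f z * L (z + y) = f z * (L (z + x) - L (z + y)) := by ring
    rw [h1, abs_mul, abs_of_nonneg (hf_nonneg z)]
    have h2 := L_lip hk₁ hk₂ hL (z + x) (z + y)
    have h3 : (z + x) - (z + y) = x - y := by ring
    rw [h3] at h2
    have h4 : (Real.nnabs (K * f z) : ℝ) = K * f z := by
      rw [Real.coe_nnabs, abs_of_nonneg (mul_nonneg hKpos.le (hf_nonneg z))]
    rw [h4]
    nlinarith [hf_nonneg z, abs_nonneg (x - y), abs_nonneg (L (z+x) - L (z+y))]
  have hdiff : ∀ᵐ z : ℝ, HasDerivAt (fun c => f z * L (z + c)) (F' z) C := by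
    have hne : ∀ᵐ z : ℝ, z ≠ -C := by
      rw [ae_iff]
      have h : {z : ℝ | ¬ z ≠ -C} = {-C} := by ext w; simp
      rw [h]; exact measure_singleton _
    refine hne.mono fun z hz => ?_
    rcases lt_or_gt_of_ne hz with h | h
    · have hev : (fun c => f z * L (z + c)) =ᶠ[nhds C] (fun c => f z * (-k₂ * (z + c))) := by
        have hm : ∀ᶠ c in nhds C, c ∈ Iio (-z) := Iio_mem_nhds (by linarith)
        refine hm.mono fun c hc => ?_
        show f z * L (z + c) = f z * (-k₂ * (z + c))
        rw [hL (z + c), if_neg (not_le.mpr (by have := mem_Iio.mp hc; linarith))]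
      have hd : HasDerivAt (fun c => f z * (-k₂ * (z + c))) (f z * (-k₂ * 1)) C :=
        (((hasDerivAt_id C).const_add z).const_mul (-k₂)).const_mul (f z)
      have := hd.congr_of_eventuallyEq hev
      have hval : F' z = f z * (-k₂ * 1) := by
        rw [hF']
        simp only [if_neg (not_lt.mpr h.le)]
        ring
      rw [hval]
      exact this
    · have hev : (fun c => f z * L (z + c)) =ᶠ[nhds C] (fun c => f z * (k₁ * (z + c))) := by
        have hm : ∀ᶠ c in nhds C, c ∈ Ioi (-z) := Ioi_mem_nhds (by linarith)
        refine hm.mono fun c hc => ?_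
        show f z * L (z + c) = f z * (k₁ * (z + c))
        rw [hL (z + c), if_pos (by have := mem_Ioi.mp hc; linarith)]
      have hd : HasDerivAt (fun c => f z * (k₁ * (z + c))) (f z * (k₁ * 1)) C :=
        (((hasDerivAt_id C).const_add z).const_mul k₁).const_mul (f z)
      have := hd.congr_of_eventuallyEq hev
      have hval : F' z = f z * (k₁ * 1) := by
        rw [hF']
        simp only [if_pos h]
        ring
      rw [hval]
      exact this
  have key := hasDerivAt_integral_of_dominated_loc_of_lip (Metric.ball_mem_nhds C one_pos)
    (Filter.Eventually.of_forall hmeas)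
    (integrable_f_L hf_meas hf_nonneg hf_int hmom hk₁ hk₂ hL C) hF'meas hlip hbound_int hdiff
  have hmin' : IsLocalMin (fun c => ∫ z, f z * L (z + c)) C := Filter.Eventually.of_forall hmin
  have hzero : (∫ z, F' z) = 0 := hmin'.hasDerivAt_eq_zero key.2
  -- compute the integral of F'
  have hF'int : Integrable F' := key.1
  have hsplit := intervalIntegral.integral_Iic_add_Ioi (b := -C) hF'int.integrableOn hF'int.integrableOn
  have hIoi : (∫ z in Ioi (-C), F' z) = (∫ z in Ioi (-C), f z) * k₁ := by
    rw [← integral_mul_const]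
    refine setIntegral_congr_fun measurableSet_Ioi fun z hz => ?_
    rw [hF']
    simp only [if_pos (mem_Ioi.mp hz)]
  have hIic : (∫ z in Iic (-C), F' z) = (∫ z in Iio (-C), f z) * (-k₂) := by
    rw [← integral_Iic_eq_integral_Iio, ← integral_mul_const]
    refine setIntegral_congr_fun measurableSet_Iic fun z hz => ?_
    rw [hF']
    simp only [if_neg (not_lt.mpr (mem_Iic.mp hz))]
  rw [hzero] at hsplit
  rw [hIoi, hIic] at hsplit
  linarith

end FOC


section Symmetry

lemma refl_total (hf_symm : ∀ x, f (-x) = f x) (φ : ℝ → ℝ) :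
    ∫ z, f z * φ (-z) = ∫ z, f z * φ z := by
  have h : (fun z => f z * φ (-z)) = fun z => (fun w => f w * φ w) (-z) := by
    funext z; simp only [hf_symm]
  rw [h]
  exact integral_neg_eq_self (fun w => f w * φ w) (volume : Measure ℝ)

lemma refl_Iio (hf_symm : ∀ x, f (-x) = f x) (φ : ℝ → ℝ) :
    ∫ z in Iio 0, f z * φ z = ∫ z in Ioi 0, f z * φ (-z) := by
  have h := integral_comp_neg_Ioi 0 (fun z => f z * φ z)
  rw [neg_zero] at h
  rw [← integral_Iic_eq_integral_Iio, ← h]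
  refine setIntegral_congr_fun measurableSet_Ioi fun z _ => ?_
  simp only [hf_symm]

/-- total mass splits at any point. -/
lemma mass_split (hf_int : Integrable f) (hf_total : ∫ z, f z = 1) (a : ℝ) :
    (∫ z in Iio a, f z) + (∫ z in Ioi a, f z) = 1 := by
  rw [← integral_Iic_eq_integral_Iio]
  rw [intervalIntegral.integral_Iic_add_Ioi hf_int.integrableOn hf_int.integrableOn, hf_total]

lemma mass_Ioi_zero (hf_symm : ∀ x, f (-x) = f x) (hf_int : Integrable f)
    (hf_total : ∫ z, f z = 1) : (∫ z in Ioi (0:ℝ), f z) = 1 / 2 := by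
  have h1 : (∫ z in Iio (0:ℝ), f z) = ∫ z in Ioi (0:ℝ), f z := by
    have := refl_Iio (f := f) hf_symm (fun _ => 1)
    simpa using this
  have h2 := mass_split hf_int hf_total 0
  linarith

/-- strict monotonicity of upper-tail mass. -/
lemma mass_strict (hf_meas : Measurable f) (hf_nonneg : ∀ x, 0 ≤ f x)
    (hf_symm : ∀ x, f (-x) = f x)
    (hf_anti : ∀ x y : ℝ, 0 ≤ x → x < y → f y < f x)
    (hf_int : Integrable f) {a b : ℝ} (hab : a < b) :
    (∫ z in Ioi b, f z) < ∫ z in Ioi a, f z := by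
  have hsplit : (∫ z in Ioi a, f z) = (∫ z in Ioc a b, f z) + ∫ z in Ioi b, f z := by
    rw [← setIntegral_union (Ioc_disjoint_Ioi le_rfl) measurableSet_Ioi
      hf_int.integrableOn hf_int.integrableOn, Ioc_union_Ioi_eq_Ioi hab.le]
  have hpos := integral_f_Ioc_pos hf_meas hf_nonneg hf_symm hf_anti hf_int hab
  linarith

end Symmetry


set_option maxHeartbeats 1000000 in
/-- The key scalar inequality. -/
lemma key_ineq {k₁ k₂ t G I S Q T J T0 ft : ℝ}
    (hk₂ : 0 < k₂) (hk : k₂ < k₁) (ht : 0 < t)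
    (hIG : I + G = 1/2)
    (hFOC : k₁ * G = k₂ * (1/2 + I))
    (hI : 0 < I) (hQ : 0 < Q) (hft : 0 < ft)
    (hT0 : 0 ≤ T)
    (hS : S ≤ t * I) (hT : t * G ≤ T)
    (hT0def : T0 = S + T)
    (hCS : S ^ 2 ≤ I * Q)
    (hconv : G ^ 2 ≤ 2 * ft * (T - t * G))
    (hIft : t * ft ≤ I) :
    (k₁ ^ 2 * (J - 2 * t * T + t ^ 2 * G)
        + k₂ ^ 2 * ((Q + J) + 2 * t * T0 + t ^ 2 / 2 + Q - 2 * t * S + t ^ 2 * I))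
      - (k₁ * (T - t * G) + k₂ * (T0 - S + t * (1/2 + I))) ^ 2
      < (k₁ ^ 2 + k₂ ^ 2) * (Q + J) - ((k₁ + k₂) * T0) ^ 2 := by
  have hk₁ : 0 < k₁ := hk₂.trans hk
  have hW : (0:ℝ) < 1/2 + I := by linarith
  have hG : G = 1/2 - I := by linarith
  subst hG
  have hk2eq : k₂ = k₁ * (1/2 - I) / (1/2 + I) := by
    field_simp
    linarith [hFOC]
  have hTtG : 0 ≤ T - t * (1/2 - I) := by linarith
  have hGnn : (0:ℝ) ≤ 1/2 - I := by nlinarith [mul_pos hk₂ hW]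
  have step1 : t ^ 2 * (1/2 - I) ^ 2 ≤ 2 * t * I * (T - t * (1/2 - I)) := by
    have h1 : t ^ 2 * (1/2 - I) ^ 2 ≤ t ^ 2 * (2 * ft * (T - t * (1/2 - I))) := by
      nlinarith [sq_nonneg t]
    have h3 : 2 * t * (t * ft) * (T - t * (1/2 - I)) ≤ 2 * t * I * (T - t * (1/2 - I)) := by
      nlinarith [mul_nonneg (mul_nonneg ht.le (sub_nonneg.mpr hIft)) hTtG]
    nlinarith
  have hΔ'pos : 0 < 2 * I * Q + 4 * I * t * T - t ^ 2 * (1/2 - I) * (1/2 + I)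
      - 2 * T * S - S ^ 2 := by
    have hGW : t ^ 2 * (1/2 - I) * (1/2 + I)
        = 2 * t ^ 2 * I * (1/2 - I) + t ^ 2 * (1/2 - I) ^ 2 := by ring
    rw [hGW]
    nlinarith [mul_pos hI hQ, mul_nonneg hT0 (sub_nonneg.mpr hS)]
  have hident : (((k₁ ^ 2 + k₂ ^ 2) * (Q + J) - ((k₁ + k₂) * T0) ^ 2)
      - ((k₁ ^ 2 * (J - 2 * t * T + t ^ 2 * (1/2 - I))
        + k₂ ^ 2 * ((Q + J) + 2 * t * T0 + t ^ 2 / 2 + Q - 2 * t * S + t ^ 2 * I))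
      - (k₁ * (T - t * (1/2 - I)) + k₂ * (T0 - S + t * (1/2 + I))) ^ 2)) * (1/2 + I) ^ 2
      = k₁ ^ 2 * (2 * I * Q + 4 * I * t * T - t ^ 2 * (1/2 - I) * (1/2 + I)
      - 2 * T * S - S ^ 2) := by
    rw [hT0def, hk2eq]
    field_simp
    ring
  nlinarith [hident, mul_pos (mul_pos (mul_pos hk₁ hk₁) hΔ'pos) (mul_pos hW hW),
    mul_pos hW hW, mul_pos hk₁ hk₁]


section Core

variable {k₁ k₂ : ℝ} {L : ℝ → ℝ}

set_option maxHeartbeats 2000000 in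
/-- The core strict variance inequality, for `k₂ < k₁` and minimizer shift `-t < 0`. -/
lemma core (hf_meas : Measurable f) (hf_nonneg : ∀ x, 0 ≤ f x)
    (hf_total : ∫ z, f z = 1)
    (hf_symm : ∀ x, f (-x) = f x)
    (hf_anti : ∀ x y : ℝ, 0 ≤ x → x < y → f y < f x)
    (hmom : Integrable (fun z => z ^ 2 * f z))
    (hk₂ : 0 < k₂) (hk : k₂ < k₁)
    (hL : ∀ z, L z = if 0 ≤ z then k₁ * z else -k₂ * z)
    {t : ℝ} (ht : 0 < t)
    (hFOC : k₁ * (∫ z in Ioi t, f z) = k₂ * ∫ z in Iio t, f z) :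
    (∫ z, f z * (L (z - t)) ^ 2) - (∫ z, f z * L (z - t)) ^ 2
      < (∫ z, f z * (L z) ^ 2) - (∫ z, f z * L z) ^ 2 := by
  have hk₁ : 0 < k₁ := hk₂.trans hk
  have int_f : Integrable f := f_integrable hf_total
  have int_fz : Integrable (fun z => f z * z) := by
    refine integrable_f_mul hf_nonneg int_f hmom measurable_id.aestronglyMeasurable
      (a := 1/2) (b := 1/2) (by norm_num) (by norm_num) fun z => ?_
    nlinarith [sq_abs z, sq_nonneg (|z| - 1), abs_nonneg z]
  have int_fz2 : Integrable (fun z => f z * z ^ 2) :=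
    hmom.congr (Filter.Eventually.of_forall fun z => mul_comm _ _)
  have intL : Integrable (fun z => f z * L z) := by
    have := integrable_f_L hf_meas hf_nonneg int_f hmom hk₁ hk₂ hL 0
    refine this.congr (Filter.Eventually.of_forall fun z => ?_)
    show f z * L (z + 0) = f z * L z
    rw [add_zero]
  have intLt : Integrable (fun z => f z * L (z - t)) := by
    have := integrable_f_L hf_meas hf_nonneg int_f hmom hk₁ hk₂ hL (-t)
    refine this.congr (Filter.Eventually.of_forall fun z => ?_)
    show f z * L (z + -t) = f z * L (z - t)
    rw [← sub_eq_add_neg]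
  have intL2 : Integrable (fun z => f z * (L z) ^ 2) := by
    have := integrable_f_Lsq hf_meas hf_nonneg int_f hmom hk₁ hk₂ hL 0
    refine this.congr (Filter.Eventually.of_forall fun z => ?_)
    show f z * (L (z + 0)) ^ 2 = f z * (L z) ^ 2
    rw [add_zero]
  have intLt2 : Integrable (fun z => f z * (L (z - t)) ^ 2) := by
    have := integrable_f_Lsq hf_meas hf_nonneg int_f hmom hk₁ hk₂ hL (-t)
    refine this.congr (Filter.Eventually.of_forall fun z => ?_)
    show f z * (L (z + -t)) ^ 2 = f z * (L (z - t)) ^ 2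
    rw [← sub_eq_add_neg]
  -- computation of integrals of f times a quadratic, over a measurable set
  have quad : ∀ (s : Set ℝ), MeasurableSet s → ∀ a b c : ℝ,
      (∫ z in s, f z * (a * z ^ 2 + b * z + c))
        = a * (∫ z in s, f z * z ^ 2) + b * (∫ z in s, f z * z) + c * ∫ z in s, f z := by
    intro s hs a b c
    have h1 : EqOn (fun z => f z * (a * z ^ 2 + b * z + c))
        (fun z => a * (f z * z ^ 2) + (b * (f z * z) + c * f z)) s := fun z _ => by
      show f z * (a * z ^ 2 + b * z + c) = a * (f z * z ^ 2) + (b * (f z * z) + c * f z)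
      ring
    have hadd1 : Integrable (fun z : ℝ => b * (f z * z) + c * f z) (volume.restrict s) :=
      ((int_fz.integrableOn).const_mul b).add ((int_f.integrableOn).const_mul c)
    rw [setIntegral_congr_fun hs h1,
      integral_add ((int_fz2.integrableOn).const_mul a) hadd1,
      integral_add ((int_fz.integrableOn).const_mul b) ((int_f.integrableOn).const_mul c),
      integral_const_mul, integral_const_mul, integral_const_mul]
    ring
  -- splitting helpers
  have hsplit_Ioi0 : ∀ g : ℝ → ℝ, Integrable g →
      (∫ z in Ioi (0:ℝ), g z) = (∫ z in Ioc 0 t, g z) + ∫ z in Ioi t, g z := by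
    intro g hg
    rw [← Ioc_union_Ioi_eq_Ioi ht.le, setIntegral_union (Ioc_disjoint_Ioi le_rfl)
      measurableSet_Ioi hg.integrableOn hg.integrableOn]
  have hdisj : Disjoint (Iio (0:ℝ)) (Ico 0 t) :=
    (Iio_disjoint_Ici le_rfl).mono_right Ico_subset_Ici_self
  have hsplit_Iiot : ∀ g : ℝ → ℝ, Integrable g →
      (∫ z in Iio t, g z) = (∫ z in Iio 0, g z) + ∫ z in Ioc 0 t, g z := by
    intro g hg
    rw [← Iio_union_Ico_eq_Iio ht.le, setIntegral_union hdisj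
      measurableSet_Ico hg.integrableOn hg.integrableOn, integral_Ico_eq_integral_Ioo,
      ← integral_Ioc_eq_integral_Ioo]
  have htot0 : ∀ g : ℝ → ℝ, Integrable g →
      (∫ z, g z) = (∫ z in Iio (0:ℝ), g z) + ∫ z in Ioi (0:ℝ), g z := by
    intro g hg
    rw [← intervalIntegral.integral_Iio_add_Ici (b := (0:ℝ)) hg.integrableOn hg.integrableOn,
      integral_Ici_eq_integral_Ioi]
  have htott : ∀ g : ℝ → ℝ, Integrable g →
      (∫ z, g z) = (∫ z in Iio t, g z) + ∫ z in Ioi t, g z := by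
    intro g hg
    rw [← intervalIntegral.integral_Iio_add_Ici (b := t) hg.integrableOn hg.integrableOn,
      integral_Ici_eq_integral_Ioi]
  -- scalars
  set G := ∫ z in Ioi t, f z with hGdef
  set I := ∫ z in Ioc 0 t, f z with hIdef
  set S := ∫ z in Ioc 0 t, f z * z with hSdef
  set Q := ∫ z in Ioc 0 t, f z * z ^ 2 with hQdef
  set T := ∫ z in Ioi t, f z * z with hTdef
  set J := ∫ z in Ioi t, f z * z ^ 2 with hJdef
  set T0 := ∫ z in Ioi (0:ℝ), f z * z with hT0def
  set QJ := ∫ z in Ioi (0:ℝ), f z * z ^ 2 with hQJdef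
  -- masses
  have m_Ioi0 : (∫ z in Ioi (0:ℝ), f z) = 1/2 := mass_Ioi_zero hf_symm int_f hf_total
  have m_Iio0 : (∫ z in Iio (0:ℝ), f z) = 1/2 := by
    have := mass_split int_f hf_total 0; linarith
  have hIG : I + G = 1/2 := by
    have := hsplit_Ioi0 f int_f; rw [m_Ioi0] at this; rw [hIdef, hGdef]; linarith
  have m_Iiot : (∫ z in Iio t, f z) = 1/2 + I := by
    rw [hsplit_Iiot f int_f, m_Iio0, hIdef]
  -- reflections
  have z_Iio0 : (∫ z in Iio (0:ℝ), f z * z) = -T0 := by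
    rw [refl_Iio hf_symm (fun z => z), hT0def, ← integral_neg]
    refine setIntegral_congr_fun measurableSet_Ioi fun z _ => ?_
    show f z * (-z) = -(f z * z)
    ring
  have z2_Iio0 : (∫ z in Iio (0:ℝ), f z * z ^ 2) = QJ := by
    rw [refl_Iio hf_symm (fun z => z ^ 2), hQJdef]
    refine setIntegral_congr_fun measurableSet_Ioi fun z _ => ?_
    show f z * (-z) ^ 2 = f z * z ^ 2
    ring
  have hT0split : T0 = S + T := by
    rw [hT0def, hsplit_Ioi0 (fun z => f z * z) int_fz, hSdef, hTdef]
  have hQJsplit : QJ = Q + J := by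
    rw [hQJdef, hsplit_Ioi0 (fun z => f z * z ^ 2) int_fz2, hQdef, hJdef]
  have z_Iiot : (∫ z in Iio t, f z * z) = -T0 + S := by
    rw [hsplit_Iiot (fun z => f z * z) int_fz, z_Iio0, hSdef]
  have z2_Iiot : (∫ z in Iio t, f z * z ^ 2) = QJ + Q := by
    rw [hsplit_Iiot (fun z => f z * z ^ 2) int_fz2, z2_Iio0, hQdef]
  -- FOC in scalar form
  have hFOC' : k₁ * G = k₂ * (1/2 + I) := by rw [hGdef, hFOC, m_Iiot]
  -- positivity and comparison facts
  have hftpos : 0 < f t := f_pos hf_nonneg hf_symm hf_anti t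
  have hI_pos : 0 < I := integral_f_Ioc_pos hf_meas hf_nonneg hf_symm hf_anti int_f ht
  have hS_nonneg : 0 ≤ S := setIntegral_nonneg measurableSet_Ioc fun z hz => by
    have := hf_nonneg z; nlinarith [hz.1]
  have hT_nonneg : 0 ≤ T := setIntegral_nonneg measurableSet_Ioi fun z hz => by
    have := hf_nonneg z; nlinarith [lt_trans ht (mem_Ioi.mp hz)]
  have hS_le : S ≤ t * I := by
    have h : S ≤ ∫ z in Ioc 0 t, f z * t := by
      refine setIntegral_mono_on int_fz.integrableOn
        (int_f.integrableOn.mul_const t) measurableSet_Ioc fun z hz => ?_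
      exact mul_le_mul_of_nonneg_left hz.2 (hf_nonneg z)
    rw [integral_mul_const] at h
    rw [hIdef]; linarith
  have hT_ge : t * G ≤ T := by
    have h : (∫ z in Ioi t, f z * t) ≤ T := by
      refine setIntegral_mono_on (int_f.integrableOn.mul_const t)
        int_fz.integrableOn measurableSet_Ioi fun z hz => ?_
      exact mul_le_mul_of_nonneg_left (mem_Ioi.mp hz).le (hf_nonneg z)
    rw [integral_mul_const] at h
    rw [hGdef]; linarith
  have hIft : t * f t ≤ I := by
    have h : (∫ _ in Ioc 0 t, f t) ≤ I := by
      refine setIntegral_mono_on ((integrableOn_const_iff (C := f t)).mpr ?_)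
        int_f.integrableOn measurableSet_Ioc fun z hz => ?_
      · right; rw [Real.volume_Ioc]; exact ENNReal.ofReal_lt_top
      · exact f_mono hf_anti hz.1.le hz.2
    rw [setIntegral_const, Real.volume_real_Ioc_of_le (by linarith),
      smul_eq_mul, sub_zero] at h
    linarith
  have hQ_pos : 0 < Q := by
    have hsub : Ioc (t/2) t ⊆ Ioc 0 t := Ioc_subset_Ioc (by linarith) le_rfl
    have h1 : (∫ z in Ioc (t/2) t, f z * z ^ 2) ≤ Q := by
      refine setIntegral_mono_set int_fz2.integrableOn ?_ (HasSubset.Subset.eventuallyLE hsub)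
      refine (ae_restrict_iff' measurableSet_Ioc).mpr (Filter.Eventually.of_forall fun z hz => ?_)
      exact mul_nonneg (hf_nonneg z) (sq_nonneg z)
    have h2 : (∫ _ in Ioc (t/2) t, f t * (t/2) ^ 2) ≤ ∫ z in Ioc (t/2) t, f z * z ^ 2 := by
      refine setIntegral_mono_on ((integrableOn_const_iff (C := f t * (t/2) ^ 2)).mpr ?_)
        int_fz2.integrableOn measurableSet_Ioc fun z hz => ?_
      · right; rw [Real.volume_Ioc]; exact ENNReal.ofReal_lt_top
      · have hfz : f t ≤ f z := f_mono hf_anti (by linarith [hz.1]) hz.2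
        have hz2 : (t/2) ^ 2 ≤ z ^ 2 := by nlinarith [hz.1, hz.2]
        nlinarith [hf_nonneg z]
    rw [setIntegral_const, Real.volume_real_Ioc_of_le (by linarith),
      smul_eq_mul] at h2
    have h3 : 0 < (t - t/2) * (f t * (t/2) ^ 2) :=
      mul_pos (by linarith) (mul_pos hftpos (pow_pos (by linarith) 2))
    linarith
  have hG_pos : 0 < G := by
    have h1 : (∫ z in Ioc t (t+1), f z) ≤ G := by
      refine setIntegral_mono_set int_f.integrableOn ?_
        (HasSubset.Subset.eventuallyLE Ioc_subset_Ioi_self)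
      exact (ae_restrict_iff' measurableSet_Ioi).mpr
        (Filter.Eventually.of_forall fun z _ => hf_nonneg z)
    linarith [integral_f_Ioc_pos hf_meas hf_nonneg hf_symm hf_anti int_f
      (by linarith : t < t + 1)]
  -- Cauchy–Schwarz : S^2 ≤ I * Q
  have hCS : S ^ 2 ≤ I * Q := by
    have hnn : 0 ≤ ∫ z in Ioc 0 t, f z * (I ^ 2 * z ^ 2 + (-(2 * I * S)) * z + S ^ 2) := by
      refine setIntegral_nonneg measurableSet_Ioc fun z hz => ?_
      have h1 : f z * (I ^ 2 * z ^ 2 + (-(2 * I * S)) * z + S ^ 2)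
          = f z * (I * z - S) ^ 2 := by ring
      rw [h1]
      exact mul_nonneg (hf_nonneg z) (sq_nonneg _)
    rw [quad _ measurableSet_Ioc] at hnn
    rw [← hQdef, ← hSdef, ← hIdef] at hnn
    nlinarith [hnn, hI_pos]
  -- bathtub : G^2 ≤ 2 f(t) (T - tG)
  have int_fzt : Integrable (fun z => f z * (z - t)) := by
    have h : (fun z => f z * (z - t)) = fun z => f z * z + (-t) * f z := by
      funext z; ring
    rw [h]
    exact int_fz.add (int_f.const_mul (-t))
  have int_fztr : ∀ r : ℝ, Integrable (fun z => f z * ((z - t) - r)) := by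
    intro r
    have h : (fun z => f z * ((z - t) - r)) = fun z => f z * z + (-(t+r)) * f z := by
      funext z; ring
    rw [h]
    exact int_fz.add (int_f.const_mul (-(t+r)))
  have hTmtG : T - t * G = ∫ z in Ioi t, f z * (z - t) := by
    have h1 : (∫ z in Ioi t, f z * (z - t))
        = ∫ z in Ioi t, f z * ((0:ℝ) * z ^ 2 + 1 * z + (-t)) := by
      refine setIntegral_congr_fun measurableSet_Ioi fun z _ => ?_
      show f z * (z - t) = f z * ((0:ℝ) * z ^ 2 + 1 * z + (-t))
      ring
    rw [h1, quad _ measurableSet_Ioi, ← hTdef, ← hGdef]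
    ring
  have hconv : G ^ 2 ≤ 2 * f t * (T - t * G) := by
    set r := G / f t with hrdef
    have hr_pos : 0 < r := div_pos hG_pos hftpos
    have hsplitG : G = (∫ z in Ioc t (t+r), f z) + ∫ z in Ioi (t+r), f z := by
      rw [hGdef, ← Ioc_union_Ioi_eq_Ioi (by linarith : t ≤ t + r),
        setIntegral_union (Ioc_disjoint_Ioi le_rfl) measurableSet_Ioi
          int_f.integrableOn int_f.integrableOn]
    have hsplitT : (∫ z in Ioi t, f z * (z - t))
        = (∫ z in Ioc t (t+r), f z * (z - t)) + ∫ z in Ioi (t+r), f z * (z - t) := by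
      rw [← Ioc_union_Ioi_eq_Ioi (by linarith : t ≤ t + r),
        setIntegral_union (Ioc_disjoint_Ioi le_rfl) measurableSet_Ioi
          int_fzt.integrableOn int_fzt.integrableOn]
    have htail : 0 ≤ ∫ z in Ioi (t+r), f z * ((z - t) - r) := by
      refine setIntegral_nonneg measurableSet_Ioi fun z hz => ?_
      have h1 := mem_Ioi.mp hz
      have h2 := hf_nonneg z
      nlinarith
    have htail' : r * (∫ z in Ioi (t+r), f z) ≤ ∫ z in Ioi (t+r), f z * (z - t) := by
      have h : (∫ z in Ioi (t+r), f z * ((z - t) - r))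
          = (∫ z in Ioi (t+r), f z * (z - t)) - r * ∫ z in Ioi (t+r), f z := by
        have h1 : EqOn (fun z => f z * ((z - t) - r))
            (fun z => f z * (z - t) - r * f z) (Ioi (t+r)) := fun z _ => by simp only; ring
        rw [setIntegral_congr_fun measurableSet_Ioi h1,
          integral_sub int_fzt.integrableOn (int_f.integrableOn.const_mul r),
          integral_const_mul]
      linarith [htail, h.le, h.ge]
    have hmid : (∫ z in Ioc t (t+r), f t * ((z - t) - r))
        ≤ ∫ z in Ioc t (t+r), f z * ((z - t) - r) := by
      refine setIntegral_mono_on ?_ ((int_fztr r).integrableOn) measurableSet_Ioc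
        fun z hz => ?_
      · exact Continuous.integrableOn_Ioc
          (continuous_const.mul ((continuous_id.sub continuous_const).sub continuous_const))
      · have h1 : f z ≤ f t := f_mono hf_anti ht.le hz.1.le
        have h2 : (z - t) - r ≤ 0 := by have := hz.2; linarith
        nlinarith
    have hmid' : (∫ z in Ioc t (t+r), f z * ((z - t) - r))
        = (∫ z in Ioc t (t+r), f z * (z - t)) - r * ∫ z in Ioc t (t+r), f z := by
      have h1 : EqOn (fun z => f z * ((z - t) - r))
          (fun z => f z * (z - t) - r * f z) (Ioc t (t+r)) := fun z _ => by simp only; ring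
      rw [setIntegral_congr_fun measurableSet_Ioc h1,
        integral_sub int_fzt.integrableOn (int_f.integrableOn.const_mul r),
        integral_const_mul]
    have hval : (∫ z in Ioc t (t+r), f t * ((z - t) - r)) = f t * (-(r^2)/2) := by
      rw [← intervalIntegral.integral_of_le (by linarith : t ≤ t + r),
        intervalIntegral.integral_const_mul]
      congr 1
      have h1 : (fun z : ℝ => (z - t) - r) = fun z : ℝ => z - (t + r) := by
        funext z; ring
      rw [h1, intervalIntegral.integral_sub intervalIntegral.intervalIntegrable_id
        (intervalIntegrable_const), integral_id, intervalIntegral.integral_const]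
      simp only [smul_eq_mul]
      ring
    -- assemble: T - tG ≥ f t (-(r²)/2) + r G
    have hfin : f t * (-(r^2)/2) + r * G ≤ T - t * G := by
      rw [hTmtG, hsplitT, hsplitG]
      have h1 : r * ((∫ z in Ioc t (t+r), f z) + ∫ z in Ioi (t+r), f z)
          = r * (∫ z in Ioc t (t+r), f z) + r * ∫ z in Ioi (t+r), f z := by ring
      rw [h1]
      have h2 : f t * (-(r^2)/2) + r * (∫ z in Ioc t (t+r), f z)
          ≤ ∫ z in Ioc t (t+r), f z * (z - t) := by
        have := hmid
        rw [hmid', hval] at this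
        linarith
      linarith [htail']
    have hval2 : 2 * f t * (f t * (-(r^2)/2) + r * G) = G ^ 2 := by
      rw [hrdef]; field_simp; ring
    calc G ^ 2 = 2 * f t * (f t * (-(r^2)/2) + r * G) := hval2.symm
      _ ≤ 2 * f t * (T - t * G) := by
          exact mul_le_mul_of_nonneg_left hfin (by positivity)
  -- the four moment computations
  have e10 : (∫ z, f z * L z) = (k₁ + k₂) * T0 := by
    rw [htot0 _ intL]
    have h1 : (∫ z in Ioi (0:ℝ), f z * L z)
        = ∫ z in Ioi (0:ℝ), f z * ((0:ℝ) * z ^ 2 + k₁ * z + 0) :=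
      setIntegral_congr_fun measurableSet_Ioi fun z hz => by
        show f z * L z = f z * ((0:ℝ) * z ^ 2 + k₁ * z + 0)
        rw [hL z, if_pos (mem_Ioi.mp hz).le]; ring
    have h2 : (∫ z in Iio (0:ℝ), f z * L z)
        = ∫ z in Iio (0:ℝ), f z * ((0:ℝ) * z ^ 2 + (-k₂) * z + 0) :=
      setIntegral_congr_fun measurableSet_Iio fun z hz => by
        show f z * L z = f z * ((0:ℝ) * z ^ 2 + (-k₂) * z + 0)
        rw [hL z, if_neg (not_le.mpr (mem_Iio.mp hz))]; ring
    rw [h1, h2, quad _ measurableSet_Ioi, quad _ measurableSet_Iio,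
      z_Iio0, ← hT0def]
    ring
  have e20 : (∫ z, f z * (L z) ^ 2) = (k₁ ^ 2 + k₂ ^ 2) * (Q + J) := by
    rw [htot0 _ intL2]
    have h1 : (∫ z in Ioi (0:ℝ), f z * (L z) ^ 2)
        = ∫ z in Ioi (0:ℝ), f z * (k₁ ^ 2 * z ^ 2 + (0:ℝ) * z + 0) :=
      setIntegral_congr_fun measurableSet_Ioi fun z hz => by
        show f z * (L z) ^ 2 = f z * (k₁ ^ 2 * z ^ 2 + (0:ℝ) * z + 0)
        rw [hL z, if_pos (mem_Ioi.mp hz).le]; ring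
    have h2 : (∫ z in Iio (0:ℝ), f z * (L z) ^ 2)
        = ∫ z in Iio (0:ℝ), f z * (k₂ ^ 2 * z ^ 2 + (0:ℝ) * z + 0) :=
      setIntegral_congr_fun measurableSet_Iio fun z hz => by
        show f z * (L z) ^ 2 = f z * (k₂ ^ 2 * z ^ 2 + (0:ℝ) * z + 0)
        rw [hL z, if_neg (not_le.mpr (mem_Iio.mp hz))]; ring
    rw [h1, h2, quad _ measurableSet_Ioi, quad _ measurableSet_Iio,
      z2_Iio0, ← hQJdef, hQJsplit]
    ring
  have e1t : (∫ z, f z * L (z - t))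
      = k₁ * (T - t * G) + k₂ * (T0 - S + t * (1/2 + I)) := by
    rw [htott _ intLt]
    have h1 : (∫ z in Ioi t, f z * L (z - t))
        = ∫ z in Ioi t, f z * ((0:ℝ) * z ^ 2 + k₁ * z + (-(k₁ * t))) :=
      setIntegral_congr_fun measurableSet_Ioi fun z hz => by
        show f z * L (z - t) = f z * ((0:ℝ) * z ^ 2 + k₁ * z + (-(k₁ * t)))
        rw [hL (z - t), if_pos (by linarith [mem_Ioi.mp hz] : (0:ℝ) ≤ z - t)]; ring
    have h2 : (∫ z in Iio t, f z * L (z - t))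
        = ∫ z in Iio t, f z * ((0:ℝ) * z ^ 2 + (-k₂) * z + k₂ * t) :=
      setIntegral_congr_fun measurableSet_Iio fun z hz => by
        show f z * L (z - t) = f z * ((0:ℝ) * z ^ 2 + (-k₂) * z + k₂ * t)
        rw [hL (z - t), if_neg (not_le.mpr (by linarith [mem_Iio.mp hz] : z - t < 0))]; ring
    rw [h1, h2, quad _ measurableSet_Ioi, quad _ measurableSet_Iio, ← hTdef, ← hGdef,
      z_Iiot, m_Iiot]
    ring
  have e2t : (∫ z, f z * (L (z - t)) ^ 2)
      = k₁ ^ 2 * (J - 2 * t * T + t ^ 2 * G)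
        + k₂ ^ 2 * ((Q + J) + 2 * t * T0 + t ^ 2 / 2 + Q - 2 * t * S + t ^ 2 * I) := by
    rw [htott _ intLt2]
    have h1 : (∫ z in Ioi t, f z * (L (z - t)) ^ 2)
        = ∫ z in Ioi t, f z * (k₁ ^ 2 * z ^ 2 + (-(2 * k₁ ^ 2 * t)) * z + k₁ ^ 2 * t ^ 2) :=
      setIntegral_congr_fun measurableSet_Ioi fun z hz => by
        show f z * (L (z - t)) ^ 2
          = f z * (k₁ ^ 2 * z ^ 2 + (-(2 * k₁ ^ 2 * t)) * z + k₁ ^ 2 * t ^ 2)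
        rw [hL (z - t), if_pos (by linarith [mem_Ioi.mp hz] : (0:ℝ) ≤ z - t)]; ring
    have h2 : (∫ z in Iio t, f z * (L (z - t)) ^ 2)
        = ∫ z in Iio t, f z * (k₂ ^ 2 * z ^ 2 + (-(2 * k₂ ^ 2 * t)) * z + k₂ ^ 2 * t ^ 2) :=
      setIntegral_congr_fun measurableSet_Iio fun z hz => by
        show f z * (L (z - t)) ^ 2
          = f z * (k₂ ^ 2 * z ^ 2 + (-(2 * k₂ ^ 2 * t)) * z + k₂ ^ 2 * t ^ 2)
        rw [hL (z - t), if_neg (not_le.mpr (by linarith [mem_Iio.mp hz] : z - t < 0))]; ring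
    rw [h1, h2, quad _ measurableSet_Ioi, quad _ measurableSet_Iio, ← hTdef, ← hGdef, ← hJdef,
      z_Iiot, z2_Iiot, m_Iiot, hQJsplit]
    ring
  rw [e10, e20, e1t, e2t]
  exact key_ineq hk₂ hk ht hIG hFOC' hI_pos hQ_pos hftpos hT_nonneg hS_le hT_ge
    hT0split hCS hconv hIft

end Core


/-- L reflects to the loss with swapped slopes. -/
lemma L_reflect {k₁ k₂ : ℝ} {L L' : ℝ → ℝ}
    (hL : ∀ z, L z = if 0 ≤ z then k₁ * z else -k₂ * z)
    (hL' : ∀ z, L' z = if 0 ≤ z then k₂ * z else -k₁ * z) :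
    ∀ x, L (-x) = L' x := by
  intro x
  rcases lt_trichotomy x 0 with h | h | h
  · rw [hL (-x), if_pos (by linarith), hL' x, if_neg (not_le.mpr h)]
    ring
  · subst h
    rw [hL, hL']
    norm_num
  · rw [hL (-x), if_neg (not_le.mpr (by linarith)), hL' x, if_pos h.le]
    ring

end VLS

open VLS in
/-- Let `f` be a symmetric probability density, strictly decreasing on `[0, ∞)`,
`Z` a random variable with density `f` and finite second moment, and
`L` the asymmetric loss with slopes `k₁, k₂ > 0`.  If `C` minimizes
`c ↦ E[L(Z + c)]`, then `Var[L(Z + C)] = Var[L(Z)]` iff `C = 0`, which in turn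
holds iff `k₁ = k₂`. -/
theorem variance_loss_shift_eq_iff
    {Ω : Type*} [MeasurableSpace Ω] (μ : Measure Ω) [IsProbabilityMeasure μ]
    (f : ℝ → ℝ) (hf_meas : Measurable f) (hf_nonneg : ∀ x, 0 ≤ f x)
    (hf_total : ∫ z, f z = 1)
    (hf_symm : ∀ x, f (-x) = f x)
    (hf_anti : ∀ x y : ℝ, 0 ≤ x → x < y → f y < f x)
    (Z : Ω → ℝ) (hZ : Measurable Z)
    (hdens : Measure.map Z μ = volume.withDensity (fun z => ENNReal.ofReal (f z)))
    (hmom : Integrable (fun z => z ^ 2 * f z))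
    (k₁ k₂ : ℝ) (hk₁ : 0 < k₁) (hk₂ : 0 < k₂)
    (L : ℝ → ℝ) (hL : ∀ z, L z = if 0 ≤ z then k₁ * z else -k₂ * z)
    (C : ℝ) (hC : ∀ c : ℝ, (∫ ω, L (Z ω + C) ∂μ) ≤ ∫ ω, L (Z ω + c) ∂μ) :
    (variance (fun ω => L (Z ω + C)) μ = variance (fun ω => L (Z ω)) μ ↔ C = 0)
      ∧ (C = 0 ↔ k₁ = k₂) := by
  have int_f : Integrable f := f_integrable hf_total
  have hLm : Measurable L := L_meas hL
  -- transfer of the minimality property to density integrals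
  have hg : ∀ c : ℝ, (∫ ω, L (Z ω + c) ∂μ) = ∫ z, f z * L (z + c) := fun c =>
    transfer_eq hZ hf_meas hf_nonneg hdens
      ((hLm.comp (measurable_id.add_const c)).aestronglyMeasurable)
  have hmin : ∀ c : ℝ, (∫ z, f z * L (z + C)) ≤ ∫ z, f z * L (z + c) := by
    intro c
    rw [← hg C, ← hg c]
    exact hC c
  -- the first-order condition
  have hFOC := foc hf_meas hf_nonneg int_f hmom hk₁ hk₂ hL C hmin
  have hAB := mass_split int_f hf_total (-C)
  have h_half : (∫ z in Ioi (0:ℝ), f z) = 1/2 := mass_Ioi_zero hf_symm int_f hf_total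
  -- second equivalence: C = 0 ↔ k₁ = k₂
  have hiff2 : C = 0 ↔ k₁ = k₂ := by
    constructor
    · intro h
      subst h
      rw [neg_zero] at hFOC hAB
      rw [h_half] at hFOC hAB
      have hB : (∫ z in Iio (0:ℝ), f z) = 1/2 := by linarith
      rw [hB] at hFOC
      linarith
    · intro h
      subst h
      have hABeq : (∫ z in Ioi (-C), f z) = ∫ z in Iio (-C), f z :=
        mul_left_cancel₀ (ne_of_gt hk₁) hFOC
      have hA : (∫ z in Ioi (-C), f z) = 1/2 := by linarith [hAB]
      by_contra h0
      rcases lt_trichotomy C 0 with hc | hc | hc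
      · have := mass_strict hf_meas hf_nonneg hf_symm hf_anti int_f
          (by linarith : (0:ℝ) < -C)
        rw [hA, h_half] at this
        exact absurd this (lt_irrefl _)
      · exact h0 hc
      · have := mass_strict hf_meas hf_nonneg hf_symm hf_anti int_f
          (by linarith : -C < 0)
        rw [hA, h_half] at this
        exact absurd this (lt_irrefl _)
  -- variance conversion
  have hvarconv : ∀ c : ℝ, variance (fun ω => L (Z ω + c)) μ
      = (∫ z, f z * (L (z + c)) ^ 2) - (∫ z, f z * L (z + c)) ^ 2 := by
    intro c
    have hφm : AEStronglyMeasurable (fun z => L (z + c)) volume :=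
      (hLm.comp (measurable_id.add_const c)).aestronglyMeasurable
    have hφ2m : AEStronglyMeasurable (fun z => (L (z + c)) ^ 2) volume :=
      ((hLm.comp (measurable_id.add_const c)).pow_const 2).aestronglyMeasurable
    have hXm : AEStronglyMeasurable (fun ω => L (Z ω + c)) μ :=
      (hLm.comp (hZ.add_const c)).aestronglyMeasurable
    have hX2int : Integrable (fun ω => (L (Z ω + c)) ^ 2) μ :=
      transfer_integrable hZ hf_meas hf_nonneg hdens hφ2m
        (integrable_f_Lsq hf_meas hf_nonneg int_f hmom hk₁ hk₂ hL c)
    have hmem : MemLp (fun ω => L (Z ω + c)) 2 μ :=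
      (memLp_two_iff_integrable_sq hXm).mpr hX2int
    rw [variance_eq_sub hmem]
    have h1 : (fun ω => L (Z ω + c)) ^ 2 = fun ω => (L (Z ω + c)) ^ 2 := by
      funext ω; simp
    rw [h1]
    rw [transfer_eq hZ hf_meas hf_nonneg hdens hφ2m,
      transfer_eq hZ hf_meas hf_nonneg hdens hφm]
  have hzero_fun : (fun ω => L (Z ω + 0)) = fun ω => L (Z ω) := by
    funext ω; rw [add_zero]
  have hvar0 : variance (fun ω => L (Z ω)) μ
      = (∫ z, f z * (L z) ^ 2) - (∫ z, f z * L z) ^ 2 := by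
    rw [← hzero_fun, hvarconv 0]
    have h1 : (∫ z, f z * (L (z + 0)) ^ 2) = ∫ z, f z * (L z) ^ 2 := by
      congr 1; funext z; rw [add_zero]
    have h2 : (∫ z, f z * L (z + 0)) = ∫ z, f z * L z := by
      congr 1; funext z; rw [add_zero]
    rw [h1, h2]
  -- first equivalence
  have hiff1 : variance (fun ω => L (Z ω + C)) μ = variance (fun ω => L (Z ω)) μ ↔ C = 0 := by
    constructor
    · intro hvar
      by_contra h0
      have hkne : k₁ ≠ k₂ := fun h => h0 (hiff2.mpr h)
      rcases lt_or_gt_of_ne hkne with hklt | hkgt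
      · -- k₁ < k₂ : C > 0, use the reflected core lemma
        have hCpos : 0 < C := by
          rcases lt_trichotomy C 0 with hc | hc | hc
          ·
            exfalso
            have hAgtB : (∫ z in Iio (-C), f z) < ∫ z in Ioi (-C), f z := by
              nlinarith [hFOC, hAB, hk₁, hk₂, hklt,
                mass_strict hf_meas hf_nonneg hf_symm hf_anti int_f
                  (by linarith : (0:ℝ) < -C)]
            have hlt := mass_strict hf_meas hf_nonneg hf_symm hf_anti int_f
              (by linarith : (0:ℝ) < -C)
            rw [h_half] at hlt
            linarith [hAB]
          · exact absurd hc h0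
          · exact hc
        set L' : ℝ → ℝ := fun x => if 0 ≤ x then k₂ * x else -k₁ * x with hL'def
        have hL' : ∀ z, L' z = if 0 ≤ z then k₂ * z else -k₁ * z := fun z => rfl
        have hLrefl := L_reflect hL hL'
        have hrefl_tail : ∀ a : ℝ, (∫ z in Ioi a, f z) = ∫ z in Iio (-a), f z := by
          intro a
          have h := integral_comp_neg_Ioi a f
          rw [integral_Iic_eq_integral_Iio] at h
          rw [← h]
          exact setIntegral_congr_fun measurableSet_Ioi fun z _ => (hf_symm z).symm
        have hFOC' : k₂ * (∫ z in Ioi C, f z) = k₁ * ∫ z in Iio C, f z := by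
          have h1 : (∫ z in Ioi (-C), f z) = ∫ z in Iio C, f z := by
            rw [hrefl_tail (-C), neg_neg]
          have h2 : (∫ z in Iio (-C), f z) = ∫ z in Ioi C, f z := by
            rw [hrefl_tail C]
          rw [← h1, ← h2]
          linarith [hFOC]
        have hcore := core hf_meas hf_nonneg hf_total hf_symm hf_anti hmom hk₁ hklt
          hL' hCpos hFOC'
        -- transfer back via reflection
        have hconv1 : ∀ p : ℕ, (∫ z, f z * (L' (z - C)) ^ p) = ∫ z, f z * (L (z + C)) ^ p := by
          intro p
          have := refl_total hf_symm (fun z => (L (z + C)) ^ p)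
          rw [← this]
          congr 1
          funext z
          have : L (-z + C) = L' (z - C) := by
            have h := hLrefl (z - C)
            rw [← h]
            congr 1
            ring
          rw [this]
        have hconv2 : ∀ p : ℕ, (∫ z, f z * (L' z) ^ p) = ∫ z, f z * (L z) ^ p := by
          intro p
          have := refl_total hf_symm (fun z => (L z) ^ p)
          rw [← this]
          congr 1
          funext z
          rw [hLrefl z]
        have e1 : (∫ z, f z * (L' (z - C)) ^ 2) = ∫ z, f z * (L (z + C)) ^ 2 := hconv1 2
        have e2 : (∫ z, f z * L' (z - C)) = ∫ z, f z * L (z + C) := by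
          have := hconv1 1
          simpa using this
        have e3 : (∫ z, f z * (L' z) ^ 2) = ∫ z, f z * (L z) ^ 2 := hconv2 2
        have e4 : (∫ z, f z * L' z) = ∫ z, f z * L z := by
          have := hconv2 1
          simpa using this
        rw [e1, e2, e3, e4] at hcore
        rw [hvarconv C, hvar0] at hvar
        linarith
      · -- k₂ < k₁ : C < 0, use core directly
        have hCneg : C < 0 := by
          rcases lt_trichotomy C 0 with hc | hc | hc
          · exact hc
          · exact absurd hc h0
          · exfalso
            have hlt := mass_strict hf_meas hf_nonneg hf_symm hf_anti int_f
              (by linarith : -C < (0:ℝ))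
            rw [h_half] at hlt
            nlinarith [hFOC, hAB, hk₁, hk₂, hkgt]
        have ht : 0 < -C := by linarith
        have hFOC' : k₁ * (∫ z in Ioi (-C), f z) = k₂ * ∫ z in Iio (-C), f z := hFOC
        have hcore := core hf_meas hf_nonneg hf_total hf_symm hf_anti hmom hk₂ hkgt
          hL ht hFOC'
        have e1 : (∫ z, f z * (L (z - -C)) ^ 2) = ∫ z, f z * (L (z + C)) ^ 2 := by
          congr 1; funext z; rw [sub_neg_eq_add]
        have e2 : (∫ z, f z * L (z - -C)) = ∫ z, f z * L (z + C) := by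
          congr 1; funext z; rw [sub_neg_eq_add]
        rw [e1, e2] at hcore
        rw [hvarconv C, hvar0] at hvar
        linarith
    · intro h
      subst h
      rw [hzero_fun]
  exact ⟨hiff1, hiff2⟩
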